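/- Let H be a minimally 2-connected simple graph and let (P_1, …, P_h) be a greedy open ear decomposition of H. Let P_i and P_j be ears with j < i such that P_i has exactly two edges, P_j has exactly three edges, and an endpoint s of P_i is an internal vertex of P_j. Then the other endpoint t of P_i is the endpoint of P_j that is not adjacent to s in the graph H_j = P_1 ∪ ⋯ ∪ P_j. -/
import Mathlib


open SimpleGraph

/-- `G` is `k`-connected: it has more than `k` vertices and deleting any set of
fewer than `k` vertices leaves a connected graph. -/
def KConnected {V : Type*} (k : ℕ) (G : SimpleGraph V) : Prop :=
  k < Nat.card V ∧
    ∀ S : Set V, S.Finite → S.ncard < k → (G.induce Sᶜ).Connected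

/-- `H` is minimally 2-connected: it is 2-connected, but deleting any edge
destroys 2-connectedness. -/
def MinimallyTwoConnected {V : Type*} (H : SimpleGraph V) : Prop :=
  KConnected 2 H ∧ ∀ e ∈ H.edgeSet, ¬ KConnected 2 (H.deleteEdges {e})

/-- The subgraph `H_k = P₁ ∪ ⋯ ∪ P_k` formed by the first `k` ears
(the ears with indices `0, …, k-1`). -/
def earPrefix {V : Type*} {H : SimpleGraph V} {h : ℕ} {s t : Fin (h + 1) → V}
    (ear : (i : Fin (h + 1)) → H.Walk (s i) (t i)) (k : ℕ) : H.Subgraph :=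
  ⨆ i : Fin (h + 1), if (i : ℕ) < k then (ear i).toSubgraph else ⊥

/-- An open ear decomposition `(P₁, …, P_{h+1})` of `H` (indexed here by
`Fin (h+1)`): the ears partition the edge set of `H`, the first ear is a cycle,
and every later ear is a path with two distinct endpoints meeting the union of
the previous ears exactly in its endpoints. -/
structure OpenEarDecomp {V : Type*} (H : SimpleGraph V) (h : ℕ) where
  /-- first endpoints of the ears -/
  s : Fin (h + 1) → V
  /-- second endpoints of the ears -/
  t : Fin (h + 1) → V
  /-- the ears, as walks in `H` -/
  ear : (i : Fin (h + 1)) → H.Walk (s i) (t i)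
  /-- the first ear is closed -/
  first_closed : s 0 = t 0
  /-- the first ear is a cycle -/
  first_cycle : ((ear 0).copy rfl first_closed.symm).IsCycle
  /-- every later ear is a path -/
  ears_path : ∀ i : Fin (h + 1), 0 < (i : ℕ) → (ear i).IsPath
  /-- every later ear has two distinct endpoints -/
  ends_ne : ∀ i : Fin (h + 1), 0 < (i : ℕ) → s i ≠ t i
  /-- the endpoints of a later ear lie in the union of the previous ears -/
  ends_mem : ∀ i : Fin (h + 1), 0 < (i : ℕ) →
    s i ∈ (earPrefix ear i).verts ∧ t i ∈ (earPrefix ear i).verts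
  /-- a later ear meets the union of the previous ears only in its endpoints -/
  internal_disjoint : ∀ i : Fin (h + 1), 0 < (i : ℕ) →
    ∀ x ∈ (ear i).support, x ∈ (earPrefix ear i).verts → x = s i ∨ x = t i
  /-- distinct ears are edge-disjoint -/
  edge_disjoint : ∀ i j : Fin (h + 1), i ≠ j →
    ∀ e ∈ (ear i).edges, e ∉ (ear j).edges
  /-- the ears cover all edges of `H` -/
  edges_cover : ∀ e ∈ H.edgeSet, ∃ i : Fin (h + 1), e ∈ (ear i).edges

/-- An ear decomposition is *greedy* if at every step the longest possible ear
is added: the first ear is a longest cycle of `H`, and no admissible ear is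
longer than the ear actually added. -/
def OpenEarDecomp.Greedy {V : Type*} {H : SimpleGraph V} {h : ℕ}
    (D : OpenEarDecomp H h) : Prop :=
  (∀ (v : V) (w : H.Walk v v), w.IsCycle → w.length ≤ (D.ear 0).length) ∧
  (∀ i : Fin (h + 1), 0 < (i : ℕ) →
    ∀ (u v : V) (q : H.Walk u v), q.IsPath → u ≠ v →
      u ∈ (earPrefix D.ear i).verts → v ∈ (earPrefix D.ear i).verts →
      (∀ x ∈ q.support, x ∈ (earPrefix D.ear i).verts → x = u ∨ x = v) →
      (∀ e ∈ q.edges, e ∉ (earPrefix D.ear i).edgeSet) →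
      q.length ≤ (D.ear i).length)

section AuxLemmas

variable {V : Type*} {H : SimpleGraph V} {h : ℕ} {s t : Fin (h + 1) → V}
variable (ear : (i : Fin (h + 1)) → H.Walk (s i) (t i))

lemma mem_earPrefix_verts_iff {v : V} {k : ℕ} :
    v ∈ (earPrefix ear k).verts ↔ ∃ r : Fin (h + 1), (r : ℕ) < k ∧ v ∈ (ear r).support := by
  rw [earPrefix, Subgraph.verts_iSup, Set.mem_iUnion]
  constructor
  · rintro ⟨r, hr⟩
    by_cases hc : (r : ℕ) < k
    · rw [if_pos hc] at hr
      exact ⟨r, hc, (Walk.mem_verts_toSubgraph _).1 hr⟩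
    · rw [if_neg hc] at hr
      simp at hr
  · rintro ⟨r, hc, hm⟩
    exact ⟨r, by rw [if_pos hc]; exact (Walk.mem_verts_toSubgraph _).2 hm⟩

lemma earPrefix_adj_iff {u v : V} {k : ℕ} :
    (earPrefix ear k).Adj u v ↔ ∃ r : Fin (h + 1), (r : ℕ) < k ∧ s(u, v) ∈ (ear r).edges := by
  rw [earPrefix, Subgraph.iSup_adj]
  constructor
  · rintro ⟨r, hr⟩
    by_cases hc : (r : ℕ) < k
    · rw [if_pos hc] at hr
      refine ⟨r, hc, ?_⟩
      rw [← Walk.mem_edges_toSubgraph, Subgraph.mem_edgeSet]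
      exact hr
    · rw [if_neg hc] at hr
      simp at hr
  · rintro ⟨r, hc, hm⟩
    refine ⟨r, ?_⟩
    rw [if_pos hc, ← Subgraph.mem_edgeSet, Walk.mem_edges_toSubgraph]
    exact hm

lemma mem_earPrefix_edgeSet_iff {e : Sym2 V} {k : ℕ} :
    e ∈ (earPrefix ear k).edgeSet ↔ ∃ r : Fin (h + 1), (r : ℕ) < k ∧ e ∈ (ear r).edges := by
  induction e using Sym2.ind with
  | _ u v => rw [Subgraph.mem_edgeSet, earPrefix_adj_iff]

lemma earPrefix_verts_mono {k l : ℕ} (hkl : k ≤ l) :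
    (earPrefix ear k).verts ⊆ (earPrefix ear l).verts := by
  intro v hv
  rw [mem_earPrefix_verts_iff] at hv ⊢
  obtain ⟨r, hr, hm⟩ := hv
  exact ⟨r, lt_of_lt_of_le hr hkl, hm⟩

lemma mem_earPrefix_of_mem_support {v : V} {r : Fin (h + 1)} {k : ℕ}
    (hrk : (r : ℕ) < k) (hv : v ∈ (ear r).support) : v ∈ (earPrefix ear k).verts :=
  (mem_earPrefix_verts_iff ear).2 ⟨r, hrk, hv⟩

/-- an edge of a late ear is not an edge of an earlier prefix -/
lemma not_mem_earPrefix_edgeSet {q : Fin (h + 1)} {k : ℕ} (hk : k ≤ (q : ℕ))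
    (hear : ∀ a b : Fin (h + 1), a ≠ b → ∀ e ∈ (ear a).edges, e ∉ (ear b).edges)
    {e : Sym2 V} (he : e ∈ (ear q).edges) : e ∉ (earPrefix ear k).edgeSet := by
  intro hmem
  rw [mem_earPrefix_edgeSet_iff] at hmem
  obtain ⟨r, hrk, hre⟩ := hmem
  exact hear q r (by intro hqr; subst hqr; omega) e he hre

/-- Walks of length 2 decompose. -/
lemma walk_length_two {G : SimpleGraph V} {a b : V} (w : G.Walk a b) (hw : w.length = 2) :
    ∃ (c : V) (h1 : G.Adj a c) (h2 : G.Adj c b),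
      w = Walk.cons h1 (Walk.cons h2 Walk.nil) := by
  match w with
  | .nil => simp at hw
  | .cons h .nil => simp at hw
  | .cons h (.cons h2 .nil) => exact ⟨_, h, h2, rfl⟩
  | .cons _ (.cons _ (.cons _ q)) => simp [Walk.length_cons] at hw

/-- Walks of length 3 decompose. -/
lemma walk_length_three {G : SimpleGraph V} {a b : V} (w : G.Walk a b) (hw : w.length = 3) :
    ∃ (c d : V) (h1 : G.Adj a c) (h2 : G.Adj c d) (h3 : G.Adj d b),
      w = Walk.cons h1 (Walk.cons h2 (Walk.cons h3 Walk.nil)) := by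
  match w with
  | .nil => simp at hw
  | .cons h .nil => simp at hw
  | .cons h (.cons h2 .nil) => simp [Walk.length_cons] at hw
  | .cons h (.cons h2 (.cons h3 .nil)) => exact ⟨_, _, h, h2, h3, rfl⟩
  | .cons _ (.cons _ (.cons _ (.cons _ q))) => simp [Walk.length_cons] at hw

/-- Appending internally disjoint paths gives a path. -/
lemma isPath_append {G : SimpleGraph V} {a b c : V} {p : G.Walk a b} {q : G.Walk b c}
    (hp : p.IsPath) (hq : q.IsPath)
    (hdisj : ∀ u, u ∈ p.support → u ∈ q.support → u = b) : (p.append q).IsPath := by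
  rw [Walk.isPath_def, Walk.support_append]
  apply List.Nodup.append hp.support_nodup
  · have := hq.support_nodup
    rw [q.support_eq_cons] at this
    exact (List.nodup_cons.1 this).2
  · intro u hu hu'
    have hb : u = b := hdisj u hu (List.mem_of_mem_tail hu')
    subst hb
    have := hq.support_nodup
    rw [q.support_eq_cons] at this
    exact (List.nodup_cons.1 this).1 hu'

/-- edges of a walk meeting a subgraph's vertex set in at most one vertex avoid its edges -/
lemma walk_edges_not_mem_prefix {G' : H.Subgraph} {a z : V} {W : H.Walk a z}
    (hWB : ∀ u ∈ W.support, u ∈ G'.verts → u = z) :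
    ∀ e ∈ W.edges, e ∉ G'.edgeSet := by
  intro e he hmem
  induction e using Sym2.ind with
  | _ u v =>
    rw [Subgraph.mem_edgeSet] at hmem
    have hu : u = z := hWB u (W.fst_mem_support_of_mem_edges he) (G'.edge_vert hmem)
    have hv : v = z := hWB v (W.snd_mem_support_of_mem_edges he) (G'.edge_vert hmem.symm)
    subst hu; subst hv
    exact H.irrefl hmem.adj_sub

end AuxLemmas

section Escape

variable {V : Type*} {H : SimpleGraph V} {h : ℕ}

/-- The escape lemma: every vertex of `H_k` outside `H_c` is joined to `H_c` by a
path meeting `H_c` only in its last vertex, which moreover can be chosen distinct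
from any given vertex; the path stays inside `H_k`. -/
lemma escape (D : OpenEarDecomp H h) {c : ℕ} (hc : 1 ≤ c) :
    ∀ (k : ℕ) (avoid v : V), v ∈ (earPrefix D.ear k).verts →
      v ∉ (earPrefix D.ear c).verts →
      ∃ (z : V) (W : H.Walk v z), W.IsPath ∧ z ∈ (earPrefix D.ear c).verts ∧ z ≠ avoid ∧
        (∀ u ∈ W.support, u ∈ (earPrefix D.ear c).verts → u = z) ∧
        (∀ u ∈ W.support, u ∈ (earPrefix D.ear k).verts) ∧ 1 ≤ W.length := by
  intro k
  induction k using Nat.strong_induction_on with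
  | _ k IH =>
  intro avoid v hvk hvc
  classical
  obtain ⟨r, hrk, hvsup⟩ := (mem_earPrefix_verts_iff D.ear).1 hvk
  by_cases hvr : v ∈ (earPrefix D.ear (r : ℕ)).verts
  · obtain ⟨z, W, h1, h2, h3, h4, h5, h6⟩ := IH (r : ℕ) hrk avoid v hvr hvc
    exact ⟨z, W, h1, h2, h3, h4,
      fun u hu => earPrefix_verts_mono D.ear (le_of_lt hrk) (h5 u hu), h6⟩
  · -- `v` is an internal vertex of ear `r`
    have hcr : c ≤ (r : ℕ) := by
      by_contra hcon
      push_neg at hcon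
      exact hvc (mem_earPrefix_of_mem_support D.ear hcon hvsup)
    have hr0 : 0 < (r : ℕ) := lt_of_lt_of_le hc hcr
    have hsr := (D.ends_mem r hr0).1
    have htr := (D.ends_mem r hr0).2
    have hvs : v ≠ D.s r := by rintro rfl; exact hvr hsr
    have hvt : v ≠ D.t r := by rintro rfl; exact hvr htr
    have hpath := D.ears_path r hr0
    have hst := D.ends_ne r hr0
    have hnodup := hpath.support_nodup
    have hdisj2 : List.Disjoint ((D.ear r).takeUntil v hvsup).support
        (((D.ear r).dropUntil v hvsup).support.tail) := by
      rw [← (D.ear r).take_spec hvsup, Walk.support_append] at hnodup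
      exact List.disjoint_of_nodup_append hnodup
    have hsr_drop : D.s r ∉ ((D.ear r).dropUntil v hvsup).support := by
      intro hmem
      rw [Walk.support_eq_cons] at hmem
      rcases List.mem_cons.1 hmem with hmem | hmem
      · exact hvs hmem.symm
      · exact hdisj2 (Walk.start_mem_support _) hmem
    have htr_take : D.t r ∉ ((D.ear r).takeUntil v hvsup).support := by
      intro hmem
      have hmem' : D.t r ∈ ((D.ear r).dropUntil v hvsup).support :=
        Walk.end_mem_support _
      rw [Walk.support_eq_cons] at hmem'
      rcases List.mem_cons.1 hmem' with hmem' | hmem'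
      · exact hvt hmem'.symm
      · exact hdisj2 hmem hmem'
    -- choose the first segment towards an endpoint of ear `r` distinct from `avoid`
    obtain ⟨z0, P0, hz0r, hz0avoid, hP0path, hP0supp, hP0B⟩ :
        ∃ (z0 : V) (P0 : H.Walk v z0), z0 ∈ (earPrefix D.ear (r : ℕ)).verts ∧ z0 ≠ avoid ∧
          P0.IsPath ∧ (∀ u ∈ P0.support, u ∈ (D.ear r).support) ∧
          (∀ u ∈ P0.support, u ∈ (earPrefix D.ear (r : ℕ)).verts → u = z0) := by
      by_cases havoid : D.s r = avoid
      · refine ⟨D.t r, (D.ear r).dropUntil v hvsup, htr, by rw [← havoid]; exact hst.symm,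
          hpath.dropUntil hvsup, fun u hu => Walk.support_dropUntil_subset _ hvsup hu, ?_⟩
        intro u hu hur
        rcases D.internal_disjoint r hr0 u (Walk.support_dropUntil_subset _ hvsup hu) hur
          with h1 | h1
        · exact absurd (h1 ▸ hu) hsr_drop
        · exact h1
      · refine ⟨D.s r, ((D.ear r).takeUntil v hvsup).reverse, hsr,
          fun hcon => havoid hcon, (hpath.takeUntil hvsup).reverse, ?_, ?_⟩
        · intro u hu
          rw [Walk.support_reverse, List.mem_reverse] at hu
          exact Walk.support_takeUntil_subset _ hvsup hu
        · intro u hu hur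
          rw [Walk.support_reverse, List.mem_reverse] at hu
          rcases D.internal_disjoint r hr0 u (Walk.support_takeUntil_subset _ hvsup hu) hur
            with h1 | h1
          · exact h1
          · exact absurd (h1 ▸ hu) htr_take
    have hvz0 : v ≠ z0 := by rintro rfl; exact hvr hz0r
    have hlenP0 : 1 ≤ P0.length := by
      rcases Nat.eq_zero_or_pos P0.length with h0 | h0
      · exact absurd (Walk.eq_of_length_eq_zero h0) hvz0
      · exact h0
    have hP0k : ∀ u ∈ P0.support, u ∈ (earPrefix D.ear k).verts := fun u hu =>
      mem_earPrefix_of_mem_support D.ear hrk (hP0supp u hu)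
    by_cases hz0c : z0 ∈ (earPrefix D.ear c).verts
    · exact ⟨z0, P0, hP0path, hz0c, hz0avoid,
        fun u hu huc => hP0B u hu (earPrefix_verts_mono D.ear hcr huc), hP0k, hlenP0⟩
    · obtain ⟨z, W1, hW1path, hzc, hzavoid, hW1B, hW1r, hW1len⟩ :=
        IH (r : ℕ) hrk avoid z0 hz0r hz0c
      refine ⟨z, P0.append W1, ?_, hzc, hzavoid, ?_, ?_, ?_⟩
      · exact isPath_append hP0path hW1path fun u hu hu' => hP0B u hu (hW1r u hu')
      · intro u hu huc
        rcases (Walk.mem_support_append_iff _ _).1 hu with hul | hur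
        · have heq := hP0B u hul (earPrefix_verts_mono D.ear hcr huc)
          rw [heq] at huc
          exact absurd huc hz0c
        · exact hW1B u hur huc
      · intro u hu
        rcases (Walk.mem_support_append_iff _ _).1 hu with hul | hur
        · exact hP0k u hul
        · exact earPrefix_verts_mono D.ear (le_of_lt hrk) (hW1r u hur)
      · rw [Walk.length_append]; omega

end Escape

section Core

variable {V : Type*} {H : SimpleGraph V} {h : ℕ}

lemma adj_of_mem_edges {a b u v : V} {w : H.Walk a b} (he : s(u, v) ∈ w.edges) :
    H.Adj u v := H.mem_edgeSet.1 (w.edges_subset_edgeSet he)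

lemma core_pos (D : OpenEarDecomp H h) (hD : D.Greedy)
    {i j : Fin (h + 1)} (hji : (j : ℕ) < (i : ℕ)) (hj0 : 0 < (j : ℕ))
    (hj3 : (D.ear j).length = 3)
    {b0 b1 b2 b3 m x y : V}
    (h01 : s(b0, b1) ∈ (D.ear j).edges) (h12 : s(b1, b2) ∈ (D.ear j).edges)
    (h23 : s(b2, b3) ∈ (D.ear j).edges)
    (hb0 : b0 ∈ (earPrefix D.ear (j : ℕ)).verts)
    (hb3 : b3 ∈ (earPrefix D.ear (j : ℕ)).verts)
    (hb1 : b1 ∉ (earPrefix D.ear (j : ℕ)).verts)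
    (hb2 : b2 ∉ (earPrefix D.ear (j : ℕ)).verts)
    (hsup : ∀ u ∈ (D.ear j).support, u = b0 ∨ u = b1 ∨ u = b2 ∨ u = b3)
    (n01 : b0 ≠ b1) (n02 : b0 ≠ b2) (n03 : b0 ≠ b3)
    (n12 : b1 ≠ b2) (n13 : b1 ≠ b3) (n23 : b2 ≠ b3)
    (hx : x = b1)
    (hxm : s(x, m) ∈ (D.ear i).edges) (hmy : s(m, y) ∈ (D.ear i).edges)
    (hm : m ∉ (earPrefix D.ear (i : ℕ)).verts)
    (hy : y ∈ (earPrefix D.ear (i : ℕ)).verts)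
    (hyx : y ≠ x) :
    y = b3 := by
  rw [hx] at hxm hyx
  have axm : H.Adj b1 m := adj_of_mem_edges hxm
  have amy : H.Adj m y := adj_of_mem_edges hmy
  have a01 : H.Adj b0 b1 := adj_of_mem_edges h01
  have a12 : H.Adj b1 b2 := adj_of_mem_edges h12
  have a23 : H.Adj b2 b3 := adj_of_mem_edges h23
  have hji' : (j : ℕ) + 1 ≤ (i : ℕ) := hji
  have hb0s : b0 ∈ (D.ear j).support := (D.ear j).fst_mem_support_of_mem_edges h01
  have hb1s : b1 ∈ (D.ear j).support := (D.ear j).snd_mem_support_of_mem_edges h01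
  have hb2s : b2 ∈ (D.ear j).support := (D.ear j).fst_mem_support_of_mem_edges h23
  have hb3s : b3 ∈ (D.ear j).support := (D.ear j).snd_mem_support_of_mem_edges h23
  have hjj1 : (j : ℕ) < (j : ℕ) + 1 := Nat.lt_succ_self _
  have hb0' : b0 ∈ (earPrefix D.ear ((j : ℕ) + 1)).verts :=
    mem_earPrefix_of_mem_support D.ear hjj1 hb0s
  have hb1' : b1 ∈ (earPrefix D.ear ((j : ℕ) + 1)).verts :=
    mem_earPrefix_of_mem_support D.ear hjj1 hb1s
  have hb2' : b2 ∈ (earPrefix D.ear ((j : ℕ) + 1)).verts :=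
    mem_earPrefix_of_mem_support D.ear hjj1 hb2s
  have hb3' : b3 ∈ (earPrefix D.ear ((j : ℕ) + 1)).verts :=
    mem_earPrefix_of_mem_support D.ear hjj1 hb3s
  have hmono : (earPrefix D.ear ((j : ℕ) + 1)).verts ⊆ (earPrefix D.ear (i : ℕ)).verts :=
    earPrefix_verts_mono D.ear hji'
  have hmonoj : (earPrefix D.ear (j : ℕ)).verts ⊆ (earPrefix D.ear ((j : ℕ) + 1)).verts :=
    earPrefix_verts_mono D.ear (Nat.le_succ _)
  have hmB : m ∉ (earPrefix D.ear ((j : ℕ) + 1)).verts := fun hh => hm (hmono hh)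
  have hmj : m ∉ (earPrefix D.ear (j : ℕ)).verts := fun hh => hmB (hmonoj hh)
  have hmb0 : m ≠ b0 := by rintro rfl; exact hm (hmono hb0')
  have hmb1 : m ≠ b1 := by rintro rfl; exact hm (hmono hb1')
  have hmb2 : m ≠ b2 := by rintro rfl; exact hm (hmono hb2')
  have hmb3 : m ≠ b3 := by rintro rfl; exact hm (hmono hb3')
  have hym : y ≠ m := by rintro rfl; exact hm hy
  have n10 := n01.symm; have n20 := n02.symm; have n30 := n03.symm
  have n21 := n12.symm; have n31 := n13.symm; have n32 := n23.symm
  have hb0m := hmb0.symm; have hb1m := hmb1.symm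
  have hb2m := hmb2.symm; have hb3m := hmb3.symm
  have hmy' := hym.symm
  have eex : ∀ e ∈ (D.ear i).edges, e ∉ (earPrefix D.ear (j : ℕ)).edgeSet := fun e he =>
    not_mem_earPrefix_edgeSet D.ear (le_of_lt hji) D.edge_disjoint he
  have eej : ∀ e ∈ (D.ear j).edges, e ∉ (earPrefix D.ear (j : ℕ)).edgeSet := fun e he =>
    not_mem_earPrefix_edgeSet D.ear (le_refl _) D.edge_disjoint he
  by_contra hy3
  by_cases hyj : y ∈ (earPrefix D.ear (j : ℕ)).verts
  · -- y is in H_j : the path y-m-b1-b2-b3 of length 4 contradicts greediness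
    have hyb2 : y ≠ b2 := by rintro rfl; exact hb2 hyj
    refine absurd (hD.2 j hj0 y b3
      (.cons amy.symm (.cons axm.symm (.cons a12 (.cons a23 .nil)))) ?_ hy3 hyj hb3 ?_ ?_) ?_
    · simp only [Walk.cons_isPath_iff, Walk.isPath_iff_eq_nil, Walk.support_cons,
        Walk.support_nil, List.mem_cons, List.mem_singleton, List.not_mem_nil]
      push_neg
      aesop
    · intro u hu huj
      simp only [Walk.support_cons, Walk.support_nil, List.mem_cons,
        List.not_mem_nil, or_false] at hu
      rcases hu with rfl | rfl | rfl | rfl | rfl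
      · exact Or.inl rfl
      · exact absurd huj hmj
      · exact absurd huj hb1
      · exact absurd huj hb2
      · exact Or.inr rfl
    · intro e he
      simp only [Walk.edges_cons, Walk.edges_nil, List.mem_cons,
        List.not_mem_nil, or_false] at he
      rcases he with rfl | rfl | rfl | rfl
      · rw [Sym2.eq_swap]; exact eex _ hmy
      · rw [Sym2.eq_swap]; exact eex _ hxm
      · exact eej _ h12
      · exact eej _ h23
    · rw [hj3]
      simp only [Walk.length_cons, Walk.length_nil]
      omega
  · by_cases hyB : y ∈ (earPrefix D.ear ((j : ℕ) + 1)).verts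
    · -- y is an internal vertex of ear j, so y = b2
      have hys : y ∈ (D.ear j).support := by
        obtain ⟨r, hr, hrs⟩ := (mem_earPrefix_verts_iff D.ear).1 hyB
        rcases Nat.lt_succ_iff_lt_or_eq.1 hr with hr' | hr'
        · exact absurd (mem_earPrefix_of_mem_support D.ear hr' hrs) hyj
        · have hrj : r = j := Fin.ext hr'
          rwa [hrj] at hrs
      have hy2 : y = b2 := by
        rcases hsup y hys with rfl | rfl | rfl | rfl
        · exact absurd hb0 hyj
        · exact absurd rfl hyx
        · rfl
        · exact absurd rfl hy3
      subst y
      -- the path b0-b1-m-b2-b3 of length 4 contradicts greediness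
      refine absurd (hD.2 j hj0 b0 b3
        (.cons a01 (.cons axm (.cons amy (.cons a23 .nil)))) ?_ n03 hb0 hb3 ?_ ?_) ?_
      · simp only [Walk.cons_isPath_iff, Walk.isPath_iff_eq_nil, Walk.support_cons,
          Walk.support_nil, List.mem_cons, List.mem_singleton, List.not_mem_nil]
        push_neg
        aesop
      · intro u hu huj
        simp only [Walk.support_cons, Walk.support_nil, List.mem_cons,
          List.not_mem_nil, or_false] at hu
        rcases hu with rfl | rfl | rfl | rfl | rfl
        · exact Or.inl rfl
        · exact absurd huj hb1
        · exact absurd huj hmj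
        · exact absurd huj hb2
        · exact Or.inr rfl
      · intro e he
        simp only [Walk.edges_cons, Walk.edges_nil, List.mem_cons,
          List.not_mem_nil, or_false] at he
        rcases he with rfl | rfl | rfl | rfl
        · exact eej _ h01
        · exact eex _ hxm
        · exact eex _ hmy
        · exact eej _ h23
      · rw [hj3]
        simp only [Walk.length_cons, Walk.length_nil]
        omega
    · -- y is outside H_{j+1} : escape to H_{j+1}
      obtain ⟨z, W, hWpath, hzB, hzb1, hWB, hWk, hWlen⟩ :=
        escape D (c := (j : ℕ) + 1) (Nat.le_add_left _ _) (i : ℕ) b1 y hy hyB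
      have hmW : m ∉ W.support := fun hmem => hm (hWk m hmem)
      have hb1W : b1 ∉ W.support := fun hmem => hzb1 (hWB b1 hmem hb1').symm
      have hWBj : ∀ u ∈ W.support, u ∈ (earPrefix D.ear (j : ℕ)).verts → u = z :=
        fun u hu huj => hWB u hu (hmonoj huj)
      have hWedg : ∀ e ∈ W.edges, e ∉ (earPrefix D.ear (j : ℕ)).edgeSet :=
        walk_edges_not_mem_prefix hWBj
      by_cases hzj : z ∈ (earPrefix D.ear (j : ℕ)).verts
      · by_cases hz0 : z = b0
        · subst z
          -- the path b3-b2-b1-m-y-...-b0 of length ≥ 5 contradicts greediness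
          refine absurd (hD.2 j hj0 b3 b0
            (.cons a23.symm (.cons a12.symm (.cons axm (.cons amy W)))) ?_ n03.symm
            hb3 hb0 ?_ ?_) ?_
          · have hb2W : b2 ∉ W.support := fun hmem => n02 (hWB b2 hmem hb2').symm
            have hb3W : b3 ∉ W.support := fun hmem => n03 (hWB b3 hmem hb3').symm
            simp only [Walk.cons_isPath_iff, Walk.support_cons, List.mem_cons]
            push_neg
            aesop
          · intro u hu huj
            simp only [Walk.support_cons, List.mem_cons] at hu
            rcases hu with rfl | rfl | rfl | rfl | hu
            · exact Or.inl rfl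
            · exact absurd huj hb2
            · exact absurd huj hb1
            · exact absurd huj hmj
            · exact Or.inr (hWBj u hu huj)
          · intro e he
            simp only [Walk.edges_cons, List.mem_cons] at he
            rcases he with rfl | rfl | rfl | rfl | he
            · rw [Sym2.eq_swap]; exact eej _ h23
            · rw [Sym2.eq_swap]; exact eej _ h12
            · exact eex _ hxm
            · exact eex _ hmy
            · exact hWedg _ he
          · rw [hj3]
            simp only [Walk.length_cons]
            omega
        · -- the path b0-b1-m-y-...-z of length ≥ 4 contradicts greediness
          refine absurd (hD.2 j hj0 b0 z
            (.cons a01 (.cons axm (.cons amy W))) ?_ (fun hh => hz0 hh.symm)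
            hb0 hzj ?_ ?_) ?_
          · have hb0W : b0 ∉ W.support := fun hmem => hz0 (hWB b0 hmem hb0').symm
            simp only [Walk.cons_isPath_iff, Walk.support_cons, List.mem_cons]
            push_neg
            aesop
          · intro u hu huj
            simp only [Walk.support_cons, List.mem_cons] at hu
            rcases hu with rfl | rfl | rfl | hu
            · exact Or.inl rfl
            · exact absurd huj hb1
            · exact absurd huj hmj
            · exact Or.inr (hWBj u hu huj)
          · intro e he
            simp only [Walk.edges_cons, List.mem_cons] at he
            rcases he with rfl | rfl | rfl | he
            · exact eej _ h01
            · exact eex _ hxm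
            · exact eex _ hmy
            · exact hWedg _ he
          · rw [hj3]
            simp only [Walk.length_cons]
            omega
      · -- z is an internal vertex of ear j, hence z = b2
        have hzs : z ∈ (D.ear j).support := by
          obtain ⟨r, hr, hrs⟩ := (mem_earPrefix_verts_iff D.ear).1 hzB
          rcases Nat.lt_succ_iff_lt_or_eq.1 hr with hr' | hr'
          · exact absurd (mem_earPrefix_of_mem_support D.ear hr' hrs) hzj
          · have hrj : r = j := Fin.ext hr'
            rwa [hrj] at hrs
        have hz2 : z = b2 := by
          rcases hsup z hzs with rfl | rfl | rfl | rfl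
          · exact absurd hb0 hzj
          · exact absurd rfl hzb1
          · rfl
          · exact absurd hb3 hzj
        subst z
        have hb3W : b3 ∉ W.support := fun hmem => n23 (hWB b3 hmem hb3').symm
        have hb0W : b0 ∉ W.support := fun hmem => n02 (hWB b0 hmem hb0')
        have hW'path : (W.append (.cons a23 .nil)).IsPath := by
          apply isPath_append hWpath
          · simp [Walk.cons_isPath_iff, n23]
          · intro u hu hu'
            simp only [Walk.support_cons, Walk.support_nil, List.mem_cons,
              List.not_mem_nil, or_false] at hu'
            rcases hu' with rfl | rfl
            · rfl
            · exact absurd hu hb3W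
        have hW'sup : ∀ u, u ∈ (W.append (.cons a23 .nil)).support →
            u ∈ W.support ∨ u = b3 := by
          intro u hu
          rcases (Walk.mem_support_append_iff _ _).1 hu with hu | hu
          · exact Or.inl hu
          · simp only [Walk.support_cons, Walk.support_nil, List.mem_cons,
              List.not_mem_nil, or_false] at hu
            rcases hu with rfl | rfl
            · exact Or.inl W.end_mem_support
            · exact Or.inr rfl
        -- the path b0-b1-m-y-...-b2-b3 of length ≥ 5 contradicts greediness
        refine absurd (hD.2 j hj0 b0 b3
          (.cons a01 (.cons axm (.cons amy (W.append (.cons a23 .nil))))) ?_ n03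
          hb0 hb3 ?_ ?_) ?_
        · have hmW' : m ∉ (W.append (.cons a23 .nil)).support := fun hmem => by
            rcases hW'sup m hmem with hu | hu
            · exact hmW hu
            · exact hmb3 hu
          have hb1W' : b1 ∉ (W.append (.cons a23 .nil)).support := fun hmem => by
            rcases hW'sup b1 hmem with hu | hu
            · exact hb1W hu
            · exact n13 hu
          have hb0W' : b0 ∉ (W.append (.cons a23 .nil)).support := fun hmem => by
            rcases hW'sup b0 hmem with hu | hu
            · exact hb0W hu
            · exact n03 hu
          simp only [Walk.cons_isPath_iff]
          exact ⟨⟨⟨hW'path, hmW'⟩, by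
            simp only [Walk.support_cons, List.mem_cons]
            push_neg
            exact ⟨hb1m, hb1W'⟩⟩, by
            simp only [Walk.support_cons, List.mem_cons]
            push_neg
            exact ⟨n01, hb0m, hb0W'⟩⟩
        · intro u hu huj
          simp only [Walk.support_cons, List.mem_cons] at hu
          rcases hu with rfl | rfl | rfl | hu
          · exact Or.inl rfl
          · exact absurd huj hb1
          · exact absurd huj hmj
          · rcases hW'sup u hu with hu' | rfl
            · exact absurd ((hWBj u hu' huj) ▸ huj) hb2
            · exact Or.inr rfl
        · intro e he
          simp only [Walk.edges_cons, Walk.edges_append, Walk.edges_nil,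
            List.mem_cons, List.mem_append, List.not_mem_nil, or_false] at he
          rcases he with rfl | rfl | rfl | he | rfl
          · exact eej _ h01
          · exact eex _ hxm
          · exact eex _ hmy
          · exact hWedg _ he
          · exact eej _ h23
        · rw [hj3]
          simp only [Walk.length_cons, Walk.length_append, Walk.length_nil]
          omega

end Core

section CoreZero

variable {V : Type*} {H : SimpleGraph V} {h : ℕ}

lemma core_zero (D : OpenEarDecomp H h) (hD : D.Greedy)
    {i : Fin (h + 1)} (hi0 : 0 < (i : ℕ))
    (h30 : (D.ear 0).length = 3)
    {c0 c1 c2 m x y : V}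
    (e01 : s(c0, c1) ∈ (D.ear 0).edges) (e12 : s(c1, c2) ∈ (D.ear 0).edges)
    (e20 : s(c2, c0) ∈ (D.ear 0).edges)
    (hsup : ∀ u ∈ (D.ear 0).support, u = c0 ∨ u = c1 ∨ u = c2)
    (n01 : c0 ≠ c1) (n02 : c0 ≠ c2) (n12 : c1 ≠ c2)
    (hx : x = c1)
    (hxm : s(x, m) ∈ (D.ear i).edges) (hmy : s(m, y) ∈ (D.ear i).edges)
    (hm : m ∉ (earPrefix D.ear (i : ℕ)).verts)
    (hy : y ∈ (earPrefix D.ear (i : ℕ)).verts)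
    (hyx : y ≠ x) :
    False := by
  rw [hx] at hxm hyx
  have axm : H.Adj c1 m := adj_of_mem_edges hxm
  have amy : H.Adj m y := adj_of_mem_edges hmy
  have a01 : H.Adj c0 c1 := adj_of_mem_edges e01
  have a12 : H.Adj c1 c2 := adj_of_mem_edges e12
  have a20 : H.Adj c2 c0 := adj_of_mem_edges e20
  have hzero : ((0 : Fin (h + 1)) : ℕ) < 1 := by simp
  have hc0s : c0 ∈ (D.ear 0).support := (D.ear 0).fst_mem_support_of_mem_edges e01
  have hc1s : c1 ∈ (D.ear 0).support := (D.ear 0).snd_mem_support_of_mem_edges e01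
  have hc2s : c2 ∈ (D.ear 0).support := (D.ear 0).fst_mem_support_of_mem_edges e20
  have hc0' : c0 ∈ (earPrefix D.ear 1).verts := mem_earPrefix_of_mem_support D.ear hzero hc0s
  have hc1' : c1 ∈ (earPrefix D.ear 1).verts := mem_earPrefix_of_mem_support D.ear hzero hc1s
  have hc2' : c2 ∈ (earPrefix D.ear 1).verts := mem_earPrefix_of_mem_support D.ear hzero hc2s
  have hmono : (earPrefix D.ear 1).verts ⊆ (earPrefix D.ear (i : ℕ)).verts :=
    earPrefix_verts_mono D.ear hi0
  have hm1 : m ∉ (earPrefix D.ear 1).verts := fun hh => hm (hmono hh)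
  have hmc0 : m ≠ c0 := by rintro rfl; exact hm1 hc0'
  have hmc1 : m ≠ c1 := by rintro rfl; exact hm1 hc1'
  have hmc2 : m ≠ c2 := by rintro rfl; exact hm1 hc2'
  have hym : y ≠ m := by rintro rfl; exact hm hy
  have n10 := n01.symm; have n20 := n02.symm; have n21 := n12.symm
  have hc0m := hmc0.symm; have hc1m := hmc1.symm; have hc2m := hmc2.symm
  have mem_sup_of_mem_one : ∀ u : V, u ∈ (earPrefix D.ear 1).verts →
      u ∈ (D.ear 0).support := by
    intro u hu
    obtain ⟨r, hr, hrs⟩ := (mem_earPrefix_verts_iff D.ear).1 hu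
    have hr0 : r = 0 := Fin.ext (by omega)
    rwa [hr0] at hrs
  by_cases hyB : y ∈ (earPrefix D.ear 1).verts
  · have hys := mem_sup_of_mem_one y hyB
    rcases hsup y hys with rfl | rfl | rfl
    · -- cycle c2-c1-m-c0-c2 of length 4
      refine absurd (hD.1 c2
        (.cons a12.symm (.cons axm (.cons amy (.cons a20.symm .nil)))) ?_) ?_
      · rw [Walk.cons_isCycle_iff]
        constructor
        · simp only [Walk.cons_isPath_iff, Walk.isPath_iff_eq_nil, Walk.support_cons,
            Walk.support_nil, List.mem_cons, List.mem_singleton, List.not_mem_nil]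
          push_neg
          aesop
        · simp only [Walk.edges_cons, Walk.edges_nil, List.mem_cons, List.not_mem_nil,
            or_false, Sym2.eq_iff]
          push_neg
          aesop
      · rw [h30]
        simp only [Walk.length_cons, Walk.length_nil]
        omega
    · exact hyx rfl
    · -- cycle c0-c1-m-c2-c0 of length 4
      refine absurd (hD.1 c0
        (.cons a01 (.cons axm (.cons amy (.cons a20 .nil)))) ?_) ?_
      · rw [Walk.cons_isCycle_iff]
        constructor
        · simp only [Walk.cons_isPath_iff, Walk.isPath_iff_eq_nil, Walk.support_cons,
            Walk.support_nil, List.mem_cons, List.mem_singleton, List.not_mem_nil]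
          push_neg
          aesop
        · simp only [Walk.edges_cons, Walk.edges_nil, List.mem_cons, List.not_mem_nil,
            or_false, Sym2.eq_iff]
          push_neg
          aesop
      · rw [h30]
        simp only [Walk.length_cons, Walk.length_nil]
        omega
  · obtain ⟨z, W, hWpath, hzB, hzc1, hWB, hWk, hWlen⟩ :=
      escape D (c := 1) (le_refl 1) (i : ℕ) c1 y hy hyB
    have hmW : m ∉ W.support := fun hmem => hm (hWk m hmem)
    have hc1W : c1 ∉ W.support := fun hmem => hzc1 (hWB c1 hmem hc1').symm
    have hmz : m ≠ z := by rintro rfl; exact hm1 hzB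
    have hzx : H.Adj z c1 := by
      rcases hsup z (mem_sup_of_mem_one z hzB) with rfl | rfl | rfl
      · exact a01
      · exact absurd rfl hzc1
      · exact a12.symm
    -- cycle c1-m-y-...-z-c1 of length ≥ 4
    refine absurd (hD.1 c1
      (.cons axm (.cons amy (W.append (.cons hzx .nil)))) ?_) ?_
    · rw [Walk.cons_isCycle_iff]
      have hW'path : (W.append (.cons hzx .nil)).IsPath := by
        apply isPath_append hWpath
        · simp [Walk.cons_isPath_iff, hzc1]
        · intro u hu hu'
          simp only [Walk.support_cons, Walk.support_nil, List.mem_cons,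
            List.not_mem_nil, or_false] at hu'
          rcases hu' with rfl | rfl
          · rfl
          · exact absurd hu hc1W
      constructor
      · rw [Walk.cons_isPath_iff]
        refine ⟨hW'path, fun hmem => ?_⟩
        rcases (Walk.mem_support_append_iff _ _).1 hmem with hu | hu
        · exact hmW hu
        · simp only [Walk.support_cons, Walk.support_nil, List.mem_cons,
            List.not_mem_nil, or_false] at hu
          rcases hu with rfl | rfl
          · exact hmz rfl
          · exact hmc1 rfl
      · intro hmem
        simp only [Walk.edges_cons, Walk.edges_append, Walk.edges_nil, List.mem_cons,
          List.mem_append, List.not_mem_nil, or_false, Sym2.eq_iff] at hmem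
        rcases hmem with hmem | hmem | hmem
        · rcases hmem with ⟨h1, h2⟩ | ⟨h1, h2⟩
          · exact hmc1 h1.symm
          · exact hyx h1.symm
        · exact hc1W (W.fst_mem_support_of_mem_edges hmem)
        · rcases hmem with ⟨h1, h2⟩ | ⟨h1, h2⟩
          · exact hmc1 h2
          · exact hmz h2
    · rw [h30]
      simp only [Walk.length_cons, Walk.length_append, Walk.length_nil]
      omega

end CoreZero


/-- In a greedy open ear decomposition of a minimally 2-connected graph, if an
ear `P_i` with exactly two edges has an endpoint `x` that is an internal vertex
of an earlier ear `P_j` with exactly three edges, then the other endpoint `y`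
of `P_i` is an endpoint of `P_j` that is not adjacent to `x` in the graph
`H_j = P₁ ∪ ⋯ ∪ P_j`. -/
theorem greedy_two_ear_on_three_ear {V : Type*}
    (H : SimpleGraph V) (hmin : MinimallyTwoConnected H) {h : ℕ}
    (D : OpenEarDecomp H h) (hD : D.Greedy)
    (i j : Fin (h + 1)) (hji : (j : ℕ) < (i : ℕ))
    (hi2 : (D.ear i).length = 2) (hj3 : (D.ear j).length = 3)
    (x y : V)
    (hxy : (x = D.s i ∧ y = D.t i) ∨ (x = D.t i ∧ y = D.s i))
    (hxint : x ∈ (D.ear j).support ∧ x ≠ D.s j ∧ x ≠ D.t j) :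
    (y = D.s j ∨ y = D.t j) ∧
      ¬ (earPrefix D.ear ((j : ℕ) + 1)).Adj x y := by
  classical
  obtain ⟨hxs, hx_ns, hx_nt⟩ := hxint
  have hi0 : 0 < (i : ℕ) := lt_of_le_of_lt (Nat.zero_le _) hji
  -- decompose ear i
  obtain ⟨m, hm1, hm2, hiw⟩ := walk_length_two (D.ear i) hi2
  have hipath := D.ears_path i hi0
  have hisup : (D.ear i).support = [D.s i, m, D.t i] := by rw [hiw]; simp
  have hiedges : (D.ear i).edges = [s(D.s i, m), s(m, D.t i)] := by rw [hiw]; simp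
  have hinodup := hipath.support_nodup
  rw [hisup] at hinodup
  simp only [List.nodup_cons, List.mem_cons, List.mem_singleton, List.not_mem_nil,
    or_false, not_or, List.nodup_nil, and_true, not_false_eq_true] at hinodup
  obtain ⟨⟨hsim, hsit⟩, hmit⟩ := hinodup
  have hmmem : m ∈ (D.ear i).support := by rw [hisup]; simp
  have hm : m ∉ (earPrefix D.ear (i : ℕ)).verts := by
    intro hmem
    rcases D.internal_disjoint i hi0 m hmmem hmem with hh | hh
    · exact hsim hh.symm
    · exact hmit hh
  have hsmem := (D.ends_mem i hi0).1
  have htmem := (D.ends_mem i hi0).2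
  have hist := D.ends_ne i hi0
  obtain ⟨hxm, hmy, hy_mem, hyx⟩ :
      s(x, m) ∈ (D.ear i).edges ∧ s(m, y) ∈ (D.ear i).edges ∧
        y ∈ (earPrefix D.ear (i : ℕ)).verts ∧ y ≠ x := by
    rcases hxy with ⟨rfl, rfl⟩ | ⟨rfl, rfl⟩
    · exact ⟨by rw [hiedges]; simp, by rw [hiedges]; simp, htmem, hist.symm⟩
    · refine ⟨by rw [hiedges, Sym2.eq_swap]; simp, by rw [hiedges, Sym2.eq_swap]; simp,
        hsmem, hist⟩
  rcases Nat.eq_zero_or_pos (j : ℕ) with hj0 | hj0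
  · -- j = 0 : the hypotheses are contradictory
    obtain rfl : j = 0 := Fin.ext (by simpa using hj0)
    obtain ⟨a1, a2, k1, k2, k3, hjw⟩ := walk_length_three (D.ear 0) hj3
    have hjsup : (D.ear 0).support = [D.s 0, a1, a2, D.t 0] := by rw [hjw]; simp
    have hjedges : (D.ear 0).edges = [s(D.s 0, a1), s(a1, a2), s(a2, D.t 0)] := by
      rw [hjw]; simp
    have hclosed := D.first_closed
    have hcyc := D.first_cycle
    have htail := hcyc.support_nodup
    rw [Walk.support_copy, hjsup] at htail
    simp only [List.tail_cons, List.nodup_cons, List.mem_cons, List.mem_singleton,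
      List.not_mem_nil, or_false, not_or, List.nodup_nil, and_true,
      not_false_eq_true] at htail
    obtain ⟨⟨n12, n1t⟩, n2t⟩ := htail
    have n01 : D.s 0 ≠ a1 := by rw [hclosed]; exact fun hh => n1t hh.symm
    have n02 : D.s 0 ≠ a2 := by rw [hclosed]; exact fun hh => n2t hh.symm
    have hsupz : ∀ u ∈ (D.ear 0).support, u = D.s 0 ∨ u = a1 ∨ u = a2 := by
      intro u hu
      rw [hjsup] at hu
      simp only [List.mem_cons, List.not_mem_nil, or_false] at hu
      rcases hu with rfl | rfl | rfl | rfl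
      · exact Or.inl rfl
      · exact Or.inr (Or.inl rfl)
      · exact Or.inr (Or.inr rfl)
      · exact Or.inl hclosed.symm
    have e01 : s(D.s 0, a1) ∈ (D.ear 0).edges := by rw [hjedges]; simp
    have e12 : s(a1, a2) ∈ (D.ear 0).edges := by rw [hjedges]; simp
    have e20 : s(a2, D.s 0) ∈ (D.ear 0).edges := by
      have h2 : s(a2, D.s 0) = s(a2, D.t 0) := by rw [hclosed]
      rw [h2, hjedges]; simp
    have hxval : x = a1 ∨ x = a2 := by
      rcases hsupz x hxs with hh | hh | hh
      · exact absurd hh hx_ns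
      · exact Or.inl hh
      · exact Or.inr hh
    rcases hxval with hx1 | hx2
    · exact (core_zero D hD hi0 hj3 e01 e12 e20 hsupz n01 n02 n12 hx1 hxm hmy hm
        hy_mem hyx).elim
    · -- mirrored triangle
      have e01' : s(D.s 0, a2) ∈ (D.ear 0).edges := by rw [Sym2.eq_swap]; exact e20
      have e12' : s(a2, a1) ∈ (D.ear 0).edges := by rw [Sym2.eq_swap]; exact e12
      have e20' : s(a1, D.s 0) ∈ (D.ear 0).edges := by rw [Sym2.eq_swap]; exact e01
      have hsupz' : ∀ u ∈ (D.ear 0).support, u = D.s 0 ∨ u = a2 ∨ u = a1 := by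
        intro u hu
        rcases hsupz u hu with hh | hh | hh
        · exact Or.inl hh
        · exact Or.inr (Or.inr hh)
        · exact Or.inr (Or.inl hh)
      exact (core_zero D hD hi0 hj3 e01' e12' e20' hsupz' n02 n01
        (fun hh => n12 hh.symm) hx2 hxm hmy hm hy_mem hyx).elim
  · -- j > 0
    obtain ⟨a1, a2, k1, k2, k3, hjw⟩ := walk_length_three (D.ear j) hj3
    have hjsup : (D.ear j).support = [D.s j, a1, a2, D.t j] := by rw [hjw]; simp
    have hjedges : (D.ear j).edges = [s(D.s j, a1), s(a1, a2), s(a2, D.t j)] := by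
      rw [hjw]; simp
    have hjpath := D.ears_path j hj0
    have hjnodup := hjpath.support_nodup
    rw [hjsup] at hjnodup
    simp only [List.nodup_cons, List.mem_cons, List.mem_singleton, List.not_mem_nil,
      or_false, not_or, List.nodup_nil, and_true, not_false_eq_true] at hjnodup
    obtain ⟨⟨ns1, ns2, nst⟩, ⟨n12, n1t⟩, n2t⟩ := hjnodup
    have hb0 := (D.ends_mem j hj0).1
    have hb3 := (D.ends_mem j hj0).2
    have ha1mem : a1 ∈ (D.ear j).support := by rw [hjsup]; simp
    have ha2mem : a2 ∈ (D.ear j).support := by rw [hjsup]; simp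
    have ha1 : a1 ∉ (earPrefix D.ear (j : ℕ)).verts := by
      intro hmem
      rcases D.internal_disjoint j hj0 a1 ha1mem hmem with hh | hh
      · exact ns1 hh.symm
      · exact n1t hh
    have ha2 : a2 ∉ (earPrefix D.ear (j : ℕ)).verts := by
      intro hmem
      rcases D.internal_disjoint j hj0 a2 ha2mem hmem with hh | hh
      · exact ns2 hh.symm
      · exact n2t hh
    have hsupj : ∀ u ∈ (D.ear j).support, u = D.s j ∨ u = a1 ∨ u = a2 ∨ u = D.t j := by
      intro u hu
      rw [hjsup] at hu
      simp only [List.mem_cons, List.not_mem_nil, or_false] at hu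
      exact hu
    have h01 : s(D.s j, a1) ∈ (D.ear j).edges := by rw [hjedges]; simp
    have h12 : s(a1, a2) ∈ (D.ear j).edges := by rw [hjedges]; simp
    have h23 : s(a2, D.t j) ∈ (D.ear j).edges := by rw [hjedges]; simp
    have hxval : x = a1 ∨ x = a2 := by
      rcases hsupj x hxs with hh | hh | hh | hh
      · exact absurd hh hx_ns
      · exact Or.inl hh
      · exact Or.inr hh
      · exact absurd hh hx_nt
    rcases hxval with hx1 | hx2
    · -- x = a1, so y = t j
      have hy3 : y = D.t j := core_pos D hD hji hj0 hj3 h01 h12 h23 hb0 hb3 ha1 ha2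
        hsupj ns1 ns2 nst n12 n1t n2t hx1 hxm hmy hm hy_mem hyx
      subst hy3
      refine ⟨Or.inr rfl, ?_⟩
      intro hadj
      rw [earPrefix_adj_iff] at hadj
      obtain ⟨r, hr, hre⟩ := hadj
      rcases Nat.lt_succ_iff_lt_or_eq.1 hr with hr' | hr'
      · refine ha1 (mem_earPrefix_of_mem_support D.ear hr' ?_)
        rw [← hx1]
        exact (D.ear r).fst_mem_support_of_mem_edges hre
      · have hrj : r = j := Fin.ext hr'
        rw [hrj, hjedges, hx1] at hre
        simp only [List.mem_cons, List.not_mem_nil, or_false] at hre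
        rcases hre with h1 | h1 | h1
        · rw [Sym2.eq_iff] at h1
          rcases h1 with ⟨e1, e2⟩ | ⟨e1, e2⟩
          · exact n1t e2.symm
          · exact nst e2.symm
        · rw [Sym2.eq_iff] at h1
          rcases h1 with ⟨e1, e2⟩ | ⟨e1, e2⟩
          · exact n2t e2.symm
          · exact n1t e2.symm
        · rw [Sym2.eq_iff] at h1
          rcases h1 with ⟨e1, e2⟩ | ⟨e1, e2⟩
          · exact n12 e1
          · exact n1t e1
    · -- x = a2, so y = s j (mirrored)
      have h01' : s(D.t j, a2) ∈ (D.ear j).edges := by rw [Sym2.eq_swap]; exact h23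
      have h12' : s(a2, a1) ∈ (D.ear j).edges := by rw [Sym2.eq_swap]; exact h12
      have h23' : s(a1, D.s j) ∈ (D.ear j).edges := by rw [Sym2.eq_swap]; exact h01
      have hsupj' : ∀ u ∈ (D.ear j).support,
          u = D.t j ∨ u = a2 ∨ u = a1 ∨ u = D.s j := by
        intro u hu
        rcases hsupj u hu with hh | hh | hh | hh
        · exact Or.inr (Or.inr (Or.inr hh))
        · exact Or.inr (Or.inr (Or.inl hh))
        · exact Or.inr (Or.inl hh)
        · exact Or.inl hh
      have hy3 : y = D.s j := core_pos D hD hji hj0 hj3 h01' h12' h23' hb3 hb0 ha2 ha1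
        hsupj' (fun hh => n2t hh.symm) (fun hh => n1t hh.symm) (fun hh => nst hh.symm)
        (fun hh => n12 hh.symm) (fun hh => ns2 hh.symm) (fun hh => ns1 hh.symm) hx2
        hxm hmy hm hy_mem hyx
      subst hy3
      refine ⟨Or.inl rfl, ?_⟩
      intro hadj
      rw [earPrefix_adj_iff] at hadj
      obtain ⟨r, hr, hre⟩ := hadj
      rcases Nat.lt_succ_iff_lt_or_eq.1 hr with hr' | hr'
      · refine ha2 (mem_earPrefix_of_mem_support D.ear hr' ?_)
        rw [← hx2]
        exact (D.ear r).fst_mem_support_of_mem_edges hre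
      · have hrj : r = j := Fin.ext hr'
        rw [hrj, hjedges, hx2] at hre
        simp only [List.mem_cons, List.not_mem_nil, or_false] at hre
        rcases hre with h1 | h1 | h1
        · rw [Sym2.eq_iff] at h1
          rcases h1 with ⟨e1, e2⟩ | ⟨e1, e2⟩
          · exact ns2 e1.symm
          · exact n12 e1.symm
        · rw [Sym2.eq_iff] at h1
          rcases h1 with ⟨e1, e2⟩ | ⟨e1, e2⟩
          · exact n12 e1.symm
          · exact ns1 e2
        · rw [Sym2.eq_iff] at h1
          rcases h1 with ⟨e1, e2⟩ | ⟨e1, e2⟩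
          · exact nst e2
          · exact ns2 e2
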